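/- arXiv:alg-geom/9407003 — 4 statements merged into one kernel-verified Lean document; each statement's English description precedes it below -/
import Mathlib

section
/- Let n ≥ 1. Every symmetric polynomial P ∈ ℚ[x_1,...,x_n] that is invariant under the simultaneous shift x_i ↦ x_i + d for all d ∈ ℚ can be written as a polynomial in z_2,...,z_n, where z_k is the k-th elementary symmetric polynomial in y_1,...,y_n and y_i = n·x_i − Σ_j x_j. -/
open MvPolynomial

/-- Every symmetric, shift-invariant polynomial `P ∈ ℚ[x_1,...,x_n]`
is a polynomial in `z_2,...,z_n`, where `z_k` is the `k`-th elementary symmetric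
polynomial in the `y_i = n·x_i − Σ_j x_j`. -/
theorem symmetric_shift_invariant_mem_adjoin_z (n : ℕ) (hn : 1 ≤ n)
    (y : Fin n → MvPolynomial (Fin n) ℚ)
    (hy : ∀ i, y i = (n : MvPolynomial (Fin n) ℚ) * X i - ∑ j, X j)
    (z : ℕ → MvPolynomial (Fin n) ℚ)
    (hz : ∀ k, z k = ∑ s ∈ Finset.powersetCard k (Finset.univ : Finset (Fin n)),
      ∏ i ∈ s, y i)
    (P : MvPolynomial (Fin n) ℚ)
    (hsym : P.IsSymmetric)
    (hshift : ∀ d : ℚ, aeval (fun j : Fin n => X j + C d) P = P) :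
    P ∈ Algebra.adjoin ℚ {q : MvPolynomial (Fin n) ℚ | ∃ k, 2 ≤ k ∧ k ≤ n ∧ q = z k} := by
  classical
  set S := Algebra.adjoin ℚ {q : MvPolynomial (Fin n) ℚ | ∃ k, 2 ≤ k ∧ k ≤ n ∧ q = z k} with hS
  have hn0 : (n : ℚ) ≠ 0 := Nat.cast_ne_zero.mpr (by omega)
  -- the generic shift map
  set Φ : MvPolynomial (Fin n) ℚ →ₐ[ℚ] Polynomial (MvPolynomial (Fin n) ℚ) :=
    aeval (fun j => Polynomial.C (X j) + Polynomial.X) with hΦ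
  have heval : ∀ (a : MvPolynomial (Fin n) ℚ) (p : MvPolynomial (Fin n) ℚ),
      Polynomial.eval a (Φ p) = aeval (fun j : Fin n => X j + a) p := by
    intro a p
    have h : (Polynomial.evalRingHom a).comp (Φ : MvPolynomial (Fin n) ℚ →+* _)
        = ((aeval (fun j : Fin n => X j + a) :
            MvPolynomial (Fin n) ℚ →ₐ[ℚ] MvPolynomial (Fin n) ℚ) :
            MvPolynomial (Fin n) ℚ →+* MvPolynomial (Fin n) ℚ) := by
      apply MvPolynomial.ringHom_ext
      · intro r
        simp [hΦ]
      · intro j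
        simp [hΦ]
    exact RingHom.congr_fun h p
  -- shift invariance for all d gives generic invariance
  have hgen : Φ P = Polynomial.C P := by
    by_contra h
    have hne : Φ P - Polynomial.C P ≠ 0 := sub_ne_zero.mpr h
    apply hne
    apply Polynomial.eq_zero_of_infinite_isRoot
    apply Set.Infinite.mono (s := Set.range (C : ℚ → MvPolynomial (Fin n) ℚ))
    · rintro x ⟨d, rfl⟩
      simp only [Set.mem_setOf_eq, Polynomial.IsRoot, Polynomial.eval_sub, Polynomial.eval_C,
        heval]
      rw [hshift d, sub_self]
    · exact Set.infinite_range_of_injective (C_injective _ _)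
  -- key: P is invariant under the substitution x_j ↦ y_j / n
  have hkey : aeval (fun j : Fin n => C ((n : ℚ)⁻¹) * y j) P = P := by
    have h1 := heval (C ((n : ℚ)⁻¹) * (-∑ i, X i)) P
    rw [hgen, Polynomial.eval_C] at h1
    have harg : (fun j : Fin n => C ((n : ℚ)⁻¹) * y j)
        = fun j : Fin n => X j + C ((n : ℚ)⁻¹) * (-∑ i, X i) := by
      funext j
      rw [hy j]
      have hnC : ((n : MvPolynomial (Fin n) ℚ)) = C (n : ℚ) := by
        simp
      rw [hnC, mul_sub, ← mul_assoc, ← C_mul, inv_mul_cancel₀ hn0, C_1, one_mul]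
      ring
    rw [harg]
    exact h1.symm
  -- fundamental theorem of symmetric polynomials
  obtain ⟨F, hF⟩ := esymmAlgHom_surjective (σ := Fin n) (R := ℚ) (n := n)
    (by simp) ⟨P, hsym⟩
  have hP : aeval (fun i : Fin n => esymm (Fin n) ℚ ((i : ℕ) + 1)) F = P := by
    have := congrArg Subtype.val hF
    rwa [esymmAlgHom_apply] at this
  -- evaluation of esymm at y/n
  have hesymm : ∀ k : ℕ,
      aeval (fun j : Fin n => C ((n : ℚ)⁻¹) * y j) (esymm (Fin n) ℚ k)
        = (C ((n : ℚ)⁻¹)) ^ k * z k := by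
    intro k
    rw [hz k, esymm, map_sum, Finset.mul_sum]
    apply Finset.sum_congr rfl
    intro s hs
    rw [map_prod]
    simp only [aeval_X]
    rw [Finset.prod_mul_distrib, Finset.prod_const, (Finset.mem_powersetCard.mp hs).2]
  -- z 1 = 0
  have hz1 : z 1 = 0 := by
    rw [hz 1, Finset.powersetCard_one, Finset.sum_map]
    simp only [Function.Embedding.coeFn_mk, Finset.prod_singleton]
    simp_rw [hy]
    rw [Finset.sum_sub_distrib, ← Finset.mul_sum, Finset.sum_const, Finset.card_univ,
      Fintype.card_fin, nsmul_eq_mul, sub_self]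
  -- each value is in S
  have hv : ∀ i : Fin n, (C ((n : ℚ)⁻¹)) ^ ((i : ℕ) + 1) * z ((i : ℕ) + 1) ∈ S := by
    intro i
    by_cases h0 : (i : ℕ) = 0
    · rw [h0]
      simp only [zero_add, pow_one, hz1, mul_zero]
      exact S.zero_mem
    · have hk2 : 2 ≤ (i : ℕ) + 1 := by omega
      have hkn : (i : ℕ) + 1 ≤ n := i.isLt
      have hzmem : z ((i : ℕ) + 1) ∈ S := Algebra.subset_adjoin ⟨(i : ℕ) + 1, hk2, hkn, rfl⟩
      have h1 : (C ((n : ℚ)⁻¹)) ^ ((i : ℕ) + 1) ∈ S := by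
        rw [← map_pow]
        exact S.algebraMap_mem _
      exact S.mul_mem h1 hzmem
  -- put it together
  have hcomp : P = aeval
      (fun i : Fin n => aeval (fun j : Fin n => C ((n : ℚ)⁻¹) * y j)
        (esymm (Fin n) ℚ ((i : ℕ) + 1))) F := by
    conv_lhs => rw [← hkey, ← hP]
    rw [← AlgHom.comp_apply, comp_aeval]
  simp_rw [hesymm] at hcomp
  rw [hcomp]
  have hmem : aeval (fun i : Fin n => (C ((n : ℚ)⁻¹)) ^ ((i : ℕ) + 1) * z ((i : ℕ) + 1)) F
      ∈ Algebra.adjoin ℚ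
        (Set.range fun i : Fin n => (C ((n : ℚ)⁻¹)) ^ ((i : ℕ) + 1) * z ((i : ℕ) + 1)) := by
    rw [Algebra.adjoin_range_eq_range_aeval]
    exact ⟨F, rfl⟩
  exact Algebra.adjoin_le (by rintro q ⟨i, rfl⟩; exact hv i) hmem
end

section
/- Let n ≥ k ≥ 2. In ℚ[x_1,...,x_n], write c_i = e_i(x_1,...,x_n) for the elementary symmetric polynomials and z_i = e_i(y_1,...,y_n) with y_j = n·x_j − Σ_m x_m. Then there exist a polynomial P with rational coefficients and a nonzero rational λ such that z_k = P(c_1, z_2, ..., z_{k−1}) + λ·c_k. -/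
open Finset MvPolynomial

theorem card_superset_aux {α : Type*} [DecidableEq α] [Fintype α] (t : Finset α) (m : ℕ) (h : t.card ≤ m) :
    ((Finset.powersetCard m (Finset.univ : Finset α)).filter (t ⊆ ·)).card
      = (Fintype.card α - t.card).choose (m - t.card) := by
  have hcard : (Finset.univ \ t).card = Fintype.card α - t.card := by
    rw [card_sdiff_of_subset (subset_univ t), card_univ]
  rw [← hcard, ← Finset.card_powersetCard (m - t.card) (Finset.univ \ t)]
  apply Finset.card_bij' (fun s _ => s \ t) (fun u _ => u ∪ t)
  · intro s hs
    simp only [mem_filter, mem_powersetCard] at hs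
    simp only [mem_powersetCard]
    exact ⟨sdiff_subset_sdiff hs.1.1 le_rfl, by rw [card_sdiff_of_subset hs.2, hs.1.2]⟩
  · intro u hu
    simp only [mem_powersetCard] at hu
    have hdisj : Disjoint u t := disjoint_of_subset_left hu.1 sdiff_disjoint
    simp only [mem_filter, mem_powersetCard]
    refine ⟨⟨subset_univ _, ?_⟩, subset_union_right⟩
    rw [card_union_of_disjoint hdisj, hu.2]
    omega
  · intro s hs
    simp only [mem_filter, mem_powersetCard] at hs
    exact sdiff_union_of_subset hs.2
  · intro u hu
    simp only [mem_powersetCard] at hu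
    have hdisj : Disjoint u t := disjoint_of_subset_left hu.1 sdiff_disjoint
    exact union_sdiff_cancel_right hdisj

theorem key_identity (n m : ℕ) (S : MvPolynomial (Fin n) ℚ) :
    ∑ s ∈ powersetCard m (Finset.univ : Finset (Fin n)),
        ∏ i ∈ s, ((n : MvPolynomial (Fin n) ℚ) * X i - S)
      = ∑ j ∈ range (m+1), ((n - j).choose (m - j) : MvPolynomial (Fin n) ℚ)
          * (n : MvPolynomial (Fin n) ℚ)^j * (-S)^(m-j)
          * (∑ u ∈ powersetCard j (Finset.univ : Finset (Fin n)), ∏ i ∈ u, X i) := by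
  have step1 : ∀ s ∈ powersetCard m (Finset.univ : Finset (Fin n)),
      ∏ i ∈ s, ((n : MvPolynomial (Fin n) ℚ) * X i - S)
        = ∑ t ∈ s.powerset, ((n : MvPolynomial (Fin n) ℚ)^t.card * ∏ i ∈ t, X i)
            * (-S)^(m - t.card) := by
    intro s hs
    rw [mem_powersetCard] at hs
    simp only [sub_eq_add_neg]
    rw [Finset.prod_add]
    apply Finset.sum_congr rfl
    intro t ht
    rw [mem_powerset] at ht
    rw [Finset.prod_const, card_sdiff_of_subset ht, hs.2, Finset.prod_mul_distrib, Finset.prod_const]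
  rw [Finset.sum_congr rfl step1]
  have step2 : ∀ s ∈ powersetCard m (Finset.univ : Finset (Fin n)),
      ∑ t ∈ s.powerset, ((n : MvPolynomial (Fin n) ℚ)^t.card * ∏ i ∈ t, X i)
            * (-S)^(m - t.card)
      = ∑ j ∈ range (m+1), ∑ t ∈ powersetCard j s,
          ((n : MvPolynomial (Fin n) ℚ)^t.card * ∏ i ∈ t, X i) * (-S)^(m - t.card) := by
    intro s hs
    rw [mem_powersetCard] at hs
    rw [Finset.sum_powerset, hs.2]
  rw [Finset.sum_congr rfl step2, Finset.sum_comm]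
  apply Finset.sum_congr rfl
  intro j hj
  rw [mem_range] at hj
  have hswap := Finset.sum_comm'
    (s := powersetCard m (Finset.univ : Finset (Fin n)))
    (t := fun s => powersetCard j s)
    (t' := powersetCard j (Finset.univ : Finset (Fin n)))
    (s' := fun t => (powersetCard m (Finset.univ : Finset (Fin n))).filter (t ⊆ ·))
    (f := fun _ t => ((n : MvPolynomial (Fin n) ℚ)^t.card * ∏ i ∈ t, X i) * (-S)^(m - t.card))
    (by
      intro s t
      simp only [mem_powersetCard, mem_filter]
      constructor
      · rintro ⟨⟨hsu, hsc⟩, hts, htc⟩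
        exact ⟨⟨⟨hsu, hsc⟩, hts⟩, hts.trans (subset_univ _), htc⟩
      · rintro ⟨⟨⟨hsu, hsc⟩, hts⟩, _, htc⟩
        exact ⟨⟨hsu, hsc⟩, hts, htc⟩)
  rw [hswap]
  rw [Finset.mul_sum]
  apply Finset.sum_congr rfl
  intro t ht
  rw [mem_powersetCard] at ht
  rw [Finset.sum_const, card_superset_aux t m (by omega), ht.2, Fintype.card_fin,
    nsmul_eq_mul]
  ring

/-- Lemma 2.6, polynomial identity: for `n ≥ k ≥ 2`, there exist a
polynomial `P` in `k−1` variables (to be evaluated at `c_1, z_2, ..., z_{k−1}`)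
and a nonzero rational `λ` such that `z_k = P(c_1, z_2, ..., z_{k−1}) + λ·c_k`. -/
theorem zk_eq_poly_add_lambda_ck (n k : ℕ) (hk : 2 ≤ k) (hkn : k ≤ n)
    (y : Fin n → MvPolynomial (Fin n) ℚ)
    (hy : ∀ i, y i = (n : MvPolynomial (Fin n) ℚ) * X i - ∑ j, X j)
    (c z : ℕ → MvPolynomial (Fin n) ℚ)
    (hc : ∀ m, c m = ∑ s ∈ Finset.powersetCard m (Finset.univ : Finset (Fin n)),
      ∏ i ∈ s, X i)
    (hz : ∀ m, z m = ∑ s ∈ Finset.powersetCard m (Finset.univ : Finset (Fin n)),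
      ∏ i ∈ s, y i) :
    ∃ (P : MvPolynomial (Fin (k - 1)) ℚ) (lam : ℚ), lam ≠ 0 ∧
      z k = aeval (fun i : Fin (k - 1) =>
        if (i : ℕ) = 0 then c 1 else z ((i : ℕ) + 1)) P + lam • c k := by
  set f : Fin (k - 1) → MvPolynomial (Fin n) ℚ :=
    fun i => if (i : ℕ) = 0 then c 1 else z ((i : ℕ) + 1) with hf
  set A : Subalgebra ℚ (MvPolynomial (Fin n) ℚ) := (aeval (R := ℚ) f).range with hA
  -- c 1 is the sum of variables
  have hc1S : c 1 = ∑ j, X j := by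
    rw [hc 1]
    simp [Finset.powersetCard_one, Finset.sum_map, Finset.prod_singleton]
  -- the main polynomial identity
  have hzm : ∀ m, z m = ∑ j ∈ range (m+1),
      ((n - j).choose (m - j) : MvPolynomial (Fin n) ℚ)
        * (n : MvPolynomial (Fin n) ℚ)^j * (-(c 1))^(m-j) * c j := by
    intro m
    rw [hz m]
    have e1 : ∑ s ∈ powersetCard m (Finset.univ : Finset (Fin n)), ∏ i ∈ s, y i
        = ∑ s ∈ powersetCard m (Finset.univ : Finset (Fin n)),
            ∏ i ∈ s, ((n : MvPolynomial (Fin n) ℚ) * X i - c 1) := by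
      apply Finset.sum_congr rfl
      intro s _
      apply Finset.prod_congr rfl
      intro i _
      rw [hy i, hc1S]
    rw [e1, key_identity n m (c 1)]
    apply Finset.sum_congr rfl
    intro j _
    rw [← hc j]
  have hn0 : (n : ℚ) ≠ 0 := by
    have : 0 < n := by omega
    exact_mod_cast this.ne'
  -- smul conversion
  have hsmul : ∀ (j : ℕ) (p : MvPolynomial (Fin n) ℚ),
      (n : MvPolynomial (Fin n) ℚ)^j * p = ((n : ℚ)^j) • p := by
    intro j p
    rw [MvPolynomial.smul_eq_C_mul, map_pow,
      map_natCast (C : ℚ →+* MvPolynomial (Fin n) ℚ) n]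
  -- membership facts
  have hc1A : c 1 ∈ A := by
    have h0 : (0 : ℕ) < k - 1 := by omega
    have : c 1 = aeval (R := ℚ) f (X (⟨0, h0⟩ : Fin (k - 1))) := by
      rw [aeval_X, hf]
      simp
    rw [this]
    exact AlgHom.mem_range_self _ _
  have hzA : ∀ j, 2 ≤ j → j ≤ k - 1 → z j ∈ A := by
    intro j h2 hj
    have hj1 : j - 1 < k - 1 := by omega
    have : z j = aeval (R := ℚ) f (X (⟨j - 1, hj1⟩ : Fin (k - 1))) := by
      rw [aeval_X, hf]
      simp only
      rw [if_neg (by omega : ¬ (j - 1 = 0))]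
      congr 1
      omega
    rw [this]
    exact AlgHom.mem_range_self _ _
  -- the sum over range m of the lower terms, given memberships
  have hcA : ∀ j, j ≤ k - 1 → c j ∈ A := by
    intro j
    induction j using Nat.strong_induction_on with
    | _ j ih =>
      intro hjk
      rcases Nat.lt_or_ge j 2 with h2 | h2
      · interval_cases j
        · have : c 0 = 1 := by
            rw [hc 0, Finset.powersetCard_zero]
            simp
          rw [this]
          exact one_mem A
        · exact hc1A
      · have hzj := hzm j
        rw [Finset.sum_range_succ, Nat.sub_self, pow_zero, Nat.choose_zero_right,
          Nat.cast_one, one_mul, mul_one, hsmul] at hzj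
        have hcj : c j = ((n : ℚ)^j)⁻¹ • (z j - ∑ i ∈ range j,
            ((n - i).choose (j - i) : MvPolynomial (Fin n) ℚ)
              * (n : MvPolynomial (Fin n) ℚ)^i * (-(c 1))^(j-i) * c i) := by
          rw [eq_comm, inv_smul_eq_iff₀ (pow_ne_zero _ hn0)]
          rw [hzj]
          ring
        rw [hcj]
        apply A.smul_mem
        apply A.sub_mem (hzA j h2 hjk)
        apply A.sum_mem
        intro i hi
        rw [mem_range] at hi
        apply A.mul_mem _ (ih i (by omega) (by omega))
        apply A.mul_mem
        apply A.mul_mem (A.natCast_mem _)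
        · exact A.pow_mem (A.natCast_mem _) _
        · exact A.pow_mem (A.neg_mem hc1A) _
  -- conclude
  have hzk := hzm k
  rw [Finset.sum_range_succ, Nat.sub_self, pow_zero, Nat.choose_zero_right,
    Nat.cast_one, one_mul, mul_one, hsmul] at hzk
  have hw : (∑ i ∈ range k,
      ((n - i).choose (k - i) : MvPolynomial (Fin n) ℚ)
        * (n : MvPolynomial (Fin n) ℚ)^i * (-(c 1))^(k-i) * c i) ∈ A := by
    apply A.sum_mem
    intro i hi
    rw [mem_range] at hi
    apply A.mul_mem _ (hcA i (by omega))
    apply A.mul_mem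
    apply A.mul_mem (A.natCast_mem _)
    · exact A.pow_mem (A.natCast_mem _) _
    · exact A.pow_mem (A.neg_mem hc1A) _
  obtain ⟨P, hP⟩ := hw
  refine ⟨P, (n : ℚ)^k, pow_ne_zero _ hn0, ?_⟩
  rw [hzk]
  congr 1
  exact hP.symm
end

section
/- Let π: E → B be a fibration (or continuous surjection) with fiber inclusion ι: F → E. Suppose the ℚ-cohomology algebra H*(E) is generated by classes α, β_1,...,β_k; suppose each β_i = π*(θ_i) for some θ_i ∈ H*(B); and suppose H*(F) is a polynomial algebra on ι*(α), with the Leray–Hirsch theorem applying (H*(E) is a free H*(B)-module on the powers of α restricting to a basis of H*(F)). Then H*(B) is generated as a ℚ-algebra by θ_1,...,θ_k. -/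
/-- abstract Leray–Hirsch lemma, as used in the proof of Theorem 1.4:
let `f : S → R` play the role of `π^* : H^*(B;ℚ) → H^*(E;ℚ)` for a fibration
`π : E → B` with fibre `F`.  Suppose `H^*(E) = R` is generated as a `ℚ`-algebra by
a class `α` together with classes `β i`, each `β i` is pulled back from a class
`θ i` in `H^*(B) = S`, and the Leray–Hirsch conclusion holds: `R` is a free
`S`-module on the powers `1, α, α², ...` (these powers restricting to a basis of
the polynomial algebra `H^*(F)` on the restriction of `α`).  Then `H^*(B) = S` is
generated as a `ℚ`-algebra by the `θ i`. -/
theorem base_generated_of_leray_hirsch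
    (S R : Type*) [CommRing S] [CommRing R] [Algebra ℚ S] [Algebra ℚ R]
    (f : S →ₐ[ℚ] R)
    (ι : Type*) (θ : ι → S) (β : ι → R) (α : R)
    (hβ : ∀ i, β i = f (θ i))
    (hgen : Algebra.adjoin ℚ (insert α (Set.range β)) = ⊤)
    (hLH : ∀ x : R, ∃! c : ℕ →₀ S, x = c.sum fun n s => f s * α ^ n) :
    Algebra.adjoin ℚ (Set.range θ) = ⊤ := by
  set P : Subalgebra ℚ S := Algebra.adjoin ℚ (Set.range θ) with hP
  -- the ℚ-algebra hom Polynomial P → R sending X to α and constants via f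
  let h : P →ₐ[ℚ] R := f.comp P.val
  let g : Polynomial P →ₐ[ℚ] R :=
    Polynomial.eval₂AlgHom h α (fun a => Commute.all _ _)
  -- g is surjective
  have hsurj : ∀ x : R, ∃ q : Polynomial P, g q = x := by
    intro x
    have hx : x ∈ g.range := by
      have hle : Algebra.adjoin ℚ (insert α (Set.range β)) ≤ g.range := by
        apply Algebra.adjoin_le
        rintro y (rfl | ⟨i, rfl⟩)
        · exact ⟨Polynomial.X, by simp [g]⟩
        · refine ⟨Polynomial.C ⟨θ i, Algebra.subset_adjoin ⟨i, rfl⟩⟩, ?_⟩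
          simp [g, h, hβ]
      rw [hgen] at hle
      exact hle trivial
    exact hx
  -- every x : R has a representation with coefficients in P
  have hrep : ∀ x : R, ∃ c : ℕ →₀ S, (∀ n, c n ∈ P) ∧
      x = c.sum fun n s => f s * α ^ n := by
    intro x
    obtain ⟨q, hq⟩ := hsurj x
    refine ⟨q.toFinsupp.coeff.mapRange (Subtype.val) rfl, fun n => ?_, ?_⟩
    · simp only [Finsupp.mapRange_apply]
      exact (q.toFinsupp.coeff n).2
    · rw [Finsupp.sum_mapRange_index (by intro n; simp)]
      rw [← hq]
      show g q = q.toFinsupp.coeff.sum fun n a => f ↑a * α ^ n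
      have hgq : g q = Polynomial.eval₂ h.toRingHom α q := rfl
      rw [hgq, Polynomial.eval₂_eq_sum]
      rcases q with ⟨q⟩
      rw [Polynomial.sum]
      rw [Finsupp.sum]
      rfl
  -- conclude every s : S lies in P
  have hmem : ∀ s : S, s ∈ P := by
    intro s
    obtain ⟨c, hcP, hc⟩ := hrep (f s)
    obtain ⟨y, _, huniq⟩ := hLH (f s)
    have h1 : c = y := huniq c hc
    have h2 : (Finsupp.single 0 s : ℕ →₀ S) = y := by
      apply huniq
      rw [Finsupp.sum_single_index (by simp)]
      simp
    have h3 : c = Finsupp.single 0 s := h1.trans h2.symm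
    have h4 := hcP 0
    rwa [h3, Finsupp.single_eq_same] at h4
  rw [eq_top_iff]
  intro s _
  exact hmem s
end

section
/- Let R be a graded-commutative ℚ-algebra that is a free module over a graded subalgebra A with basis {1, u, u², u³, ...} for some u ∈ R (each element of R has a unique expression Σ a_i u^i with a_i ∈ A, a_i = 0 for all but finitely many i). If R is generated as a ℚ-algebra by u together with a set S ⊆ A, then A is generated as a ℚ-algebra by S. -/
/-- let `R` be a commutative `ℚ`-algebra which is a free module over
a subalgebra `A` with basis the powers `1, u, u², ...` of an element `u ∈ R`
(every element of `R` is uniquely `Σ aᵢ uⁱ` with `aᵢ ∈ A`, almost all zero).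
If `R` is generated as a `ℚ`-algebra by `u` together with a set `S ⊆ A`, then
`A` is generated as a `ℚ`-algebra by `S`. -/
theorem subalgebra_generated_of_free_on_powers
    (R : Type*) [CommRing R] [Algebra ℚ R]
    (A : Subalgebra ℚ R) (u : R)
    (hfree : ∀ x : R, ∃! c : ℕ →₀ A, x = c.sum fun n a => (a : R) * u ^ n)
    (S : Set R) (hS : S ⊆ (A : Set R))
    (hgen : Algebra.adjoin ℚ (insert u S) = ⊤) :
    (A : Set R) ⊆ ↑(Algebra.adjoin ℚ S) := by
  classical
  intro a ha
  set P := Algebra.adjoin ℚ S with hP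
  have hPA : P ≤ A := Algebra.adjoin_le hS
  have hrange : ∀ x : R, ∃ p : Polynomial ↥P,
      Polynomial.eval₂ (P.val : ↥P →+* R) u p = x := by
    intro x
    have hx : x ∈ Algebra.adjoin ℚ (insert u S) := hgen ▸ Algebra.mem_top
    induction hx using Algebra.adjoin_induction with
    | mem y hy =>
      rcases hy with rfl | hy
      · exact ⟨Polynomial.X, Polynomial.eval₂_X _ _⟩
      · exact ⟨Polynomial.C ⟨y, Algebra.subset_adjoin hy⟩, Polynomial.eval₂_C _ _⟩
    | algebraMap q =>
      exact ⟨Polynomial.C ⟨algebraMap ℚ R q, P.algebraMap_mem q⟩, Polynomial.eval₂_C _ _⟩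
    | add x y _ _ hx hy =>
      obtain ⟨p, hp⟩ := hx; obtain ⟨q, hq⟩ := hy
      exact ⟨p + q, by simp [hp, hq]⟩
    | mul x y _ _ hx hy =>
      obtain ⟨p, hp⟩ := hx; obtain ⟨q, hq⟩ := hy
      exact ⟨p * q, by simp [hp, hq]⟩
  obtain ⟨p, hp⟩ := hrange a
  set c : ℕ →₀ A := p.toFinsupp.coeff.mapRange (fun b : ↥P => (⟨(b : R), hPA b.2⟩ : A)) rfl with hc
  have hsum : a = c.sum fun n x => (x : R) * u ^ n := by
    rw [← hp, Polynomial.eval₂_eq_sum, hc, Finsupp.sum_mapRange_index (by intro n; simp)]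
    rfl
  obtain ⟨c₀, _, huniq⟩ := hfree a
  have h1 : c = c₀ := huniq _ hsum
  have h2 : Finsupp.single 0 (⟨a, ha⟩ : A) = c₀ := by
    refine huniq _ ?_
    show a = _
    rw [Finsupp.sum_single_index (by simp)]
    simp
  have h3 : c 0 = (⟨a, ha⟩ : A) := by rw [h1, ← h2]; simp
  have h4 : c 0 = (⟨(p.toFinsupp.coeff 0 : R), hPA (p.toFinsupp.coeff 0).2⟩ : A) := by
    rw [hc, Finsupp.mapRange_apply]
  have : ((p.toFinsupp.coeff 0 : R)) = a := by
    have := h4 ▸ h3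
    exact congrArg Subtype.val this
  exact this ▸ (p.toFinsupp.coeff 0).2
end
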